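/- arXiv:1909.01519 — 2 statements merged into one kernel-verified Lean document; each statement's English description precedes it below -/
import Mathlib

section
/- Let λ₁ ≥ λ₂ ≥ ... ≥ λ_p ≥ 0 with λ₁ > 0 and define J_λ(x) = Σᵢ λᵢ x₍ᵢ₎² using the decreasingly sorted squared entries of x. Then √(J_λ(·)) satisfies the triangle inequality: for all x, y ∈ ℝ^p, √(J_λ(x + y)) ≤ √(J_λ(x)) + √(J_λ(y)). -/
/-- The squared entries of `x` sorted in non-increasing order. -/
noncomputable def sortedSq {p : ℕ} (x : Fin p → ℝ) : Fin p → ℝ :=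
  fun i => (x (Tuple.sort (fun j => -((x j) ^ 2)) i)) ^ 2

/-- The ordered ℓ₂ regularizer `J_λ(x) = Σᵢ λᵢ x₍ᵢ₎²`. -/
noncomputable def Jlam {p : ℕ} (lam x : Fin p → ℝ) : ℝ :=
  ∑ i, lam i * sortedSq x i

lemma sortedSq_antitone {p : ℕ} (x : Fin p → ℝ) : Antitone (sortedSq x) := by
  have h := Tuple.monotone_sort (fun j => -((x j) ^ 2))
  intro i j hij
  have := h hij
  simp only [Function.comp] at this
  simpa [sortedSq] using neg_le_neg_iff.mp this

lemma sum_perm_le_Jlam {p : ℕ} (lam : Fin p → ℝ) (hmono : Antitone lam)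
    (x : Fin p → ℝ) (τ : Equiv.Perm (Fin p)) :
    ∑ i, lam i * (x (τ i)) ^ 2 ≤ Jlam lam x := by
  set s := Tuple.sort (fun j => -((x j) ^ 2)) with hs
  have hmv : Monovary lam (sortedSq x) := hmono.monovary (sortedSq_antitone x)
  have key := hmv.sum_mul_comp_perm_le_sum_mul (σ := τ.trans s.symm)
  have heq : ∀ i, sortedSq x ((τ.trans s.symm) i) = (x (τ i)) ^ 2 := by
    intro i; simp [sortedSq, ← hs]
  calc ∑ i, lam i * (x (τ i)) ^ 2
      = ∑ i, lam i * sortedSq x ((τ.trans s.symm) i) :=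
        Finset.sum_congr rfl fun i _ => by rw [heq i]
    _ ≤ ∑ i, lam i * sortedSq x i := key
    _ = Jlam lam x := rfl

lemma Jlam_nonneg_sum {p : ℕ} (lam : Fin p → ℝ) (hpos : ∀ i, 0 ≤ lam i)
    (z : Fin p → ℝ) (τ : Equiv.Perm (Fin p)) :
    (0:ℝ) ≤ ∑ i, lam i * (z (τ i)) ^ 2 :=
  Finset.sum_nonneg fun i _ => mul_nonneg (hpos i) (sq_nonneg _)

theorem stmt2 {p : ℕ} (lam : Fin p → ℝ) (hmono : Antitone lam)
    (hpos : ∀ i, 0 < lam i) (x y : Fin p → ℝ) :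
    Real.sqrt (Jlam lam (x + y)) ≤ Real.sqrt (Jlam lam x) + Real.sqrt (Jlam lam y) := by
  set τ := Tuple.sort (fun j => -(((x + y) j) ^ 2)) with hτ
  have hJ : Jlam lam (x + y) = ∑ i, lam i * ((x + y) (τ i)) ^ 2 := rfl
  -- Euclidean space vectors
  set u : EuclideanSpace ℝ (Fin p) :=
    (WithLp.equiv 2 (Fin p → ℝ)).symm (fun i => Real.sqrt (lam i) * x (τ i)) with hu
  set v : EuclideanSpace ℝ (Fin p) :=
    (WithLp.equiv 2 (Fin p → ℝ)).symm (fun i => Real.sqrt (lam i) * y (τ i)) with hv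
  have hsq : ∀ i (z : Fin p → ℝ), (Real.sqrt (lam i) * z (τ i)) ^ 2 = lam i * (z (τ i)) ^ 2 := by
    intro i z
    rw [mul_pow, Real.sq_sqrt (hpos i).le]
  have hnorm : ∀ (z : Fin p → ℝ),
      ‖(WithLp.equiv 2 (Fin p → ℝ)).symm (fun i => Real.sqrt (lam i) * z (τ i))‖
        = Real.sqrt (∑ i, lam i * (z (τ i)) ^ 2) := by
    intro z
    rw [EuclideanSpace.norm_eq]
    congr 1
    refine Finset.sum_congr rfl fun i _ => ?_
    rw [WithLp.equiv_symm_apply, PiLp.toLp_apply, Real.norm_eq_abs, sq_abs, hsq i z]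
  have huv : ‖u + v‖ = Real.sqrt (Jlam lam (x + y)) := by
    have : (u + v) = (WithLp.equiv 2 (Fin p → ℝ)).symm
        (fun i => Real.sqrt (lam i) * (x + y) (τ i)) := by
      rw [hu, hv, WithLp.equiv_symm_apply, ← WithLp.toLp_add]
      congr 1
      funext i
      simp [Pi.add_apply, mul_add]
    rw [this, hnorm, hJ]
  have h1 : ‖u‖ ≤ Real.sqrt (Jlam lam x) := by
    rw [hu, hnorm]
    exact Real.sqrt_le_sqrt (sum_perm_le_Jlam lam hmono x τ)
  have h2 : ‖v‖ ≤ Real.sqrt (Jlam lam y) := by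
    rw [hv, hnorm]
    exact Real.sqrt_le_sqrt (sum_perm_le_Jlam lam hmono y τ)
  calc Real.sqrt (Jlam lam (x + y)) = ‖u + v‖ := huv.symm
    _ ≤ ‖u‖ + ‖v‖ := norm_add_le u v
    _ ≤ _ := add_le_add h1 h2
end

section
/- With λ₁ ≥ ... ≥ λ_p ≥ 0 and λ₁ > 0, the function x ↦ √(J_λ(x)), where J_λ(x) = Σᵢ λᵢ x₍ᵢ₎² with decreasingly sorted squared entries, is a norm on ℝ^p; in particular it is a convex function. -/
lemma Jlam_nonneg {p : ℕ} (lam : Fin p → ℝ) (hpos : ∀ i, 0 ≤ lam i) (x : Fin p → ℝ) :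
    0 ≤ Jlam lam x :=
  Finset.sum_nonneg fun i _ => mul_nonneg (hpos i) (sq_nonneg _)

/-- Rearrangement: any permutation gives a value at most `Jlam`. -/
lemma rearrange_le {p : ℕ} (lam : Fin p → ℝ) (hmono : Antitone lam)
    (x : Fin p → ℝ) (σ : Equiv.Perm (Fin p)) :
    ∑ i, lam i * (x (σ i)) ^ 2 ≤ Jlam lam x := by
  set τ := Tuple.sort (fun j => -((x j) ^ 2)) with hτ
  set g : Fin p → ℝ := fun i => (x (τ i)) ^ 2 with hg
  have hganti : Antitone g := by
    have hm := Tuple.monotone_sort (fun j => -((x j) ^ 2))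
    intro a b hab
    have h2 := hm hab
    simp only [Function.comp] at h2
    simp only [hg]
    linarith
  have hmv : Monovary lam g := hmono.monovary hganti
  have key := hmv.sum_smul_comp_perm_le_sum_smul (σ := σ.trans τ.symm)
  simp only [smul_eq_mul] at key
  calc ∑ i, lam i * (x (σ i)) ^ 2
      = ∑ i, lam i * g ((σ.trans τ.symm) i) := by
        apply Finset.sum_congr rfl
        intro i _
        simp [hg, Equiv.trans_apply]
    _ ≤ ∑ i, lam i * g i := key
    _ = Jlam lam x := by
        apply Finset.sum_congr rfl
        intro i _
        rfl

/-- `Jlam` as the value at the sorting permutation. -/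
lemma Jlam_eq {p : ℕ} (lam x : Fin p → ℝ) :
    Jlam lam x = ∑ i, lam i * (x (Tuple.sort (fun j => -((x j) ^ 2)) i)) ^ 2 := rfl

lemma Jlam_smul {p : ℕ} (lam : Fin p → ℝ) (hmono : Antitone lam)
    (c : ℝ) (x : Fin p → ℝ) : Jlam lam (c • x) = c ^ 2 * Jlam lam x := by
  have h1 : Jlam lam (c • x) ≤ c ^ 2 * Jlam lam x := by
    rw [Jlam_eq lam (c • x)]
    set σ := Tuple.sort (fun j => -(((c • x) j) ^ 2))
    have : ∑ i, lam i * ((c • x) (σ i)) ^ 2 = c ^ 2 * ∑ i, lam i * (x (σ i)) ^ 2 := by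
      rw [Finset.mul_sum]
      apply Finset.sum_congr rfl
      intro i _
      simp [Pi.smul_apply, mul_pow]
      ring
    rw [this]
    exact mul_le_mul_of_nonneg_left (rearrange_le lam hmono x σ) (sq_nonneg c)
  have h2 : c ^ 2 * Jlam lam x ≤ Jlam lam (c • x) := by
    rw [Jlam_eq lam x]
    set σ := Tuple.sort (fun j => -((x j) ^ 2))
    have : c ^ 2 * ∑ i, lam i * (x (σ i)) ^ 2 = ∑ i, lam i * ((c • x) (σ i)) ^ 2 := by
      rw [Finset.mul_sum]
      apply Finset.sum_congr rfl
      intro i _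
      simp [Pi.smul_apply, mul_pow]
      ring
    rw [this]
    exact rearrange_le lam hmono (c • x) σ
  linarith

lemma weighted_minkowski {p : ℕ} (lam : Fin p → ℝ) (hpos : ∀ i, 0 ≤ lam i)
    (a b : Fin p → ℝ) :
    Real.sqrt (∑ i, lam i * (a i + b i) ^ 2) ≤
      Real.sqrt (∑ i, lam i * a i ^ 2) + Real.sqrt (∑ i, lam i * b i ^ 2) := by
  set u : EuclideanSpace ℝ (Fin p) := WithLp.toLp 2 (fun i => Real.sqrt (lam i) * a i) with hu
  set v : EuclideanSpace ℝ (Fin p) := WithLp.toLp 2 (fun i => Real.sqrt (lam i) * b i) with hv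
  have key : ∀ (w : EuclideanSpace ℝ (Fin p)) (c : Fin p → ℝ),
      (∀ i, w i = Real.sqrt (lam i) * c i) →
      ‖w‖ = Real.sqrt (∑ i, lam i * c i ^ 2) := by
    intro w c hw
    rw [EuclideanSpace.norm_eq]
    congr 1
    apply Finset.sum_congr rfl
    intro i _
    rw [hw i, Real.norm_eq_abs, sq_abs, mul_pow, Real.sq_sqrt (hpos i)]
  have h1 : ‖u + v‖ = Real.sqrt (∑ i, lam i * (a i + b i) ^ 2) := by
    apply key
    intro i
    have : (u + v) i = u i + v i := rfl
    rw [this, hu, hv]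
    ring
  have h2 : ‖u‖ = Real.sqrt (∑ i, lam i * a i ^ 2) := key u a fun i => rfl
  have h3 : ‖v‖ = Real.sqrt (∑ i, lam i * b i ^ 2) := key v b fun i => rfl
  rw [← h1, ← h2, ← h3]
  exact norm_add_le u v

lemma Jlam_triangle {p : ℕ} (lam : Fin p → ℝ) (hmono : Antitone lam)
    (hpos : ∀ i, 0 ≤ lam i) (x y : Fin p → ℝ) :
    Real.sqrt (Jlam lam (x + y)) ≤ Real.sqrt (Jlam lam x) + Real.sqrt (Jlam lam y) := by
  set σ := Tuple.sort (fun j => -(((x + y) j) ^ 2))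
  have h0 : Jlam lam (x + y) = ∑ i, lam i * (x (σ i) + y (σ i)) ^ 2 := by
    rw [Jlam_eq]
    rfl
  calc Real.sqrt (Jlam lam (x + y))
      = Real.sqrt (∑ i, lam i * (x (σ i) + y (σ i)) ^ 2) := by rw [h0]
    _ ≤ Real.sqrt (∑ i, lam i * (x (σ i)) ^ 2) + Real.sqrt (∑ i, lam i * (y (σ i)) ^ 2) :=
        weighted_minkowski lam hpos (fun i => x (σ i)) (fun i => y (σ i))
    _ ≤ Real.sqrt (Jlam lam x) + Real.sqrt (Jlam lam y) := by
        gcongr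
        · exact rearrange_le lam hmono x σ
        · exact rearrange_le lam hmono y σ

theorem stmt3 {p : ℕ} (lam : Fin p → ℝ) (hmono : Antitone lam)
    (hpos : ∀ i, 0 < lam i) :
    (∀ x : Fin p → ℝ, 0 ≤ Real.sqrt (Jlam lam x)) ∧
    (∀ x : Fin p → ℝ, Real.sqrt (Jlam lam x) = 0 ↔ x = 0) ∧
    (∀ (c : ℝ) (x : Fin p → ℝ),
      Real.sqrt (Jlam lam (c • x)) = |c| * Real.sqrt (Jlam lam x)) ∧
    (∀ x y : Fin p → ℝ,
      Real.sqrt (Jlam lam (x + y)) ≤ Real.sqrt (Jlam lam x) + Real.sqrt (Jlam lam y)) ∧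
    ConvexOn ℝ Set.univ (fun x : Fin p → ℝ => Real.sqrt (Jlam lam x)) := by
  have hpos' : ∀ i, 0 ≤ lam i := fun i => (hpos i).le
  have hnn := Jlam_nonneg lam hpos'
  have hhom : ∀ (c : ℝ) (x : Fin p → ℝ),
      Real.sqrt (Jlam lam (c • x)) = |c| * Real.sqrt (Jlam lam x) := by
    intro c x
    rw [Jlam_smul lam hmono, Real.sqrt_mul (sq_nonneg c), Real.sqrt_sq_eq_abs]
  have htri := Jlam_triangle lam hmono hpos'
  refine ⟨fun x => Real.sqrt_nonneg _, ?_, hhom, htri, ?_⟩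
  · intro x
    constructor
    · intro h
      have hJ : Jlam lam x = 0 := by
        have h1 : Jlam lam x ≤ 0 := Real.sqrt_eq_zero'.mp h
        linarith [hnn x]
      -- all terms zero
      have hterm : ∀ i ∈ Finset.univ, lam i * sortedSq x i = 0 := by
        apply (Finset.sum_eq_zero_iff_of_nonneg ?_).mp hJ
        intro i _
        exact mul_nonneg (hpos' i) (sq_nonneg _)
      funext j
      set τ := Tuple.sort (fun j => -((x j) ^ 2))
      have hj : lam (τ.symm j) * sortedSq x (τ.symm j) = 0 := hterm _ (Finset.mem_univ _)
      have : sortedSq x (τ.symm j) = 0 := by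
        rcases mul_eq_zero.mp hj with h1 | h1
        · exact absurd h1 (hpos _).ne'
        · exact h1
      have : (x j) ^ 2 = 0 := by
        simpa [sortedSq, τ] using this
      simpa [pow_eq_zero_iff] using this
    · intro h
      subst h
      have : Jlam lam (0 : Fin p → ℝ) = 0 := by
        simp [Jlam, sortedSq]
      rw [this, Real.sqrt_zero]
  · refine ⟨convex_univ, ?_⟩
    intro x _ y _ a b ha hb hab
    calc Real.sqrt (Jlam lam (a • x + b • y))
        ≤ Real.sqrt (Jlam lam (a • x)) + Real.sqrt (Jlam lam (b • y)) := htri _ _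
      _ = a * Real.sqrt (Jlam lam x) + b * Real.sqrt (Jlam lam y) := by
          rw [hhom a x, hhom b y, abs_of_nonneg ha, abs_of_nonneg hb]
end
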